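/- With M of type 1' and r = ⌊a2/a1⌋ + 1: if a2 > (r-1)a1 then D_l ≡ (-y^b)^{l+1} (mod x) for 1 ≤ l ≤ r; if a2 = (r-1)a1 (and I_2(M) prime) then D_l ≡ (-y^b)^{l+1} (mod z) for 1 ≤ l ≤ r. -/

import Mathlib

open MvPolynomial


lemma primeX13h (i : Fin 3) {k : Type*} [Field k] : Prime (X i : MvPolynomial (Fin 3) k) := by
  rw [← MulEquiv.prime_iff ((renameEquiv k (Equiv.swap i 0)).trans (finSuccEquiv k 2)).toMulEquiv]
  have : ((renameEquiv k (Equiv.swap i 0)).trans (finSuccEquiv k 2)).toMulEquiv (X i)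
      = Polynomial.X := by
    show (finSuccEquiv k 2) ((renameEquiv k (Equiv.swap i 0)) (X i)) = Polynomial.X
    rw [renameEquiv_apply, rename_X, Equiv.swap_apply_left, finSuccEquiv_X_zero]
  rw [this]
  exact Polynomial.prime_X

lemma notdvdX13 {k : Type*} [Field k] {i j : Fin 3} (hij : i ≠ j) (n : ℕ) :
    ¬ (X i : MvPolynomial (Fin 3) k) ∣ X j ^ n := by
  intro h
  obtain ⟨c, hc⟩ := (primeX13h i).dvd_of_dvd_pow h
  have := congrArg (eval (fun t => if t = j then (1:k) else 0)) hc
  simp [hij] at this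

lemma hardcase {k : Type*} [Field k] (a1 b c2 s : ℕ) (ha1 : 0 < a1) (hb : 0 < b) (hc2 : 0 < c2)
    (x y z F G H : MvPolynomial (Fin 3) k)
    (hx : x = X 0) (hy : y = X 1) (hz : z = X 2)
    (hF : F = y ^ (2 * b) - x ^ ((s + 1) * a1) * z ^ ((s + 1) * c2))
    (hG : G = z ^ ((s + 1) * c2 + c2) - y ^ b * x ^ a1)
    (hH : H = x ^ (a1 + (s + 1) * a1) - z ^ c2 * y ^ b)
    (hP : (Ideal.span {F, G, H} : Ideal (MvPolynomial (Fin 3) k)).IsPrime) : False := by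
  classical
  set d0 : ℕ := b * ((s + 3) * (a1 * c2)) with hd0
  have hd0pos : 0 < d0 := by positivity
  set Q : MvPolynomial (Fin 3) k := ∑ i ∈ Finset.range (s + 3), (x ^ a1) ^ i * (z ^ c2) ^ (s + 3 - 1 - i) with hQ
  -- membership
  have hmem : (x ^ a1 - z ^ c2) * Q ∈ Ideal.span ({F, G, H} : Set (MvPolynomial (Fin 3) k)) := by
    have hgeom : Q * (x ^ a1 - z ^ c2) = (x ^ a1) ^ (s + 3) - (z ^ c2) ^ (s + 3) :=
      geom_sum₂_mul _ _ (s + 3)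
    have hcomb : (x ^ a1) ^ (s + 3) - (z ^ c2) ^ (s + 3) = x ^ a1 * H - z ^ c2 * G := by
      rw [hH, hG]; ring
    have : (x ^ a1 - z ^ c2) * Q = x ^ a1 * H - z ^ c2 * G := by
      rw [mul_comm, hgeom, hcomb]
    rw [this]
    exact Ideal.sub_mem _
      (Ideal.mul_mem_left _ _ (Ideal.subset_span (by simp)))
      (Ideal.mul_mem_left _ _ (Ideal.subset_span (by simp)))
  -- representation lemma
  have hrep : ∀ g : MvPolynomial (Fin 3) k, g ∈ Ideal.span ({F, G, H} : Set (MvPolynomial (Fin 3) k)) →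
      ∃ p q h : MvPolynomial (Fin 3) k, g = p * F + q * G + h * H := by
    intro g hg
    rw [show ({F, G, H} : Set (MvPolynomial (Fin 3) k)) = insert F {G, H} from rfl, Ideal.mem_span_insert] at hg
    obtain ⟨p, g1, hg1, rfl⟩ := hg
    rw [show ({G, H} : Set (MvPolynomial (Fin 3) k)) = insert G {H} from rfl, Ideal.mem_span_insert] at hg1
    obtain ⟨q, g2, hg2, rfl⟩ := hg1
    rw [Ideal.mem_span_singleton'] at hg2
    obtain ⟨h, rfl⟩ := hg2
    exact ⟨p, q, h, by ring⟩
  -- the weighting morphism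
  set w : Fin 3 → ℕ :=
    ![b * ((s + 3) * c2), (s + 1) * ((s + 3) * (a1 * c2)), b * ((s + 3) * a1)] with hwdef
  set φ : MvPolynomial (Fin 3) k →ₐ[k] Polynomial (MvPolynomial (Fin 3) k) :=
    aeval (fun i => Polynomial.X ^ w i * Polynomial.C (X i)) with hφ
  have φx : φ x = Polynomial.X ^ (b * ((s + 3) * c2)) * Polynomial.C x := by
    rw [hx, hφ, aeval_X]; simp [hwdef]
  have φy : φ y = Polynomial.X ^ ((s + 1) * ((s + 3) * (a1 * c2))) * Polynomial.C y := by
    rw [hy, hφ, aeval_X]; simp [hwdef]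
  have φz : φ z = Polynomial.X ^ (b * ((s + 3) * a1)) * Polynomial.C z := by
    rw [hz, hφ, aeval_X]; simp [hwdef]
  -- images of the generators
  have hφF : φ F = Polynomial.X ^ (2 * ((s + 1) * d0)) * Polynomial.C F := by
    have h1 : φ (y ^ (2 * b)) = Polynomial.X ^ ((s + 1) * ((s + 3) * (a1 * c2)) * (2 * b))
        * Polynomial.C (y ^ (2 * b)) := by
      rw [map_pow, φy, mul_pow, ← pow_mul, ← map_pow]
    have h2 : φ (x ^ ((s + 1) * a1) * z ^ ((s + 1) * c2))
        = Polynomial.X ^ (b * ((s + 3) * c2) * ((s + 1) * a1) + b * ((s + 3) * a1) * ((s + 1) * c2))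
          * Polynomial.C (x ^ ((s + 1) * a1) * z ^ ((s + 1) * c2)) := by
      rw [map_mul, map_pow, map_pow, φx, φz, mul_pow, mul_pow, ← pow_mul, ← pow_mul,
        ← map_pow, ← map_pow]
      rw [Polynomial.C_mul, pow_add]
      ring
    rw [hF, map_sub, h1, h2,
      show (s + 1) * ((s + 3) * (a1 * c2)) * (2 * b) = 2 * ((s + 1) * d0) by rw [hd0]; ring,
      show b * ((s + 3) * c2) * ((s + 1) * a1) + b * ((s + 3) * a1) * ((s + 1) * c2)
          = 2 * ((s + 1) * d0) by rw [hd0]; ring,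
      map_sub, mul_sub]
  have hφG : φ G = Polynomial.X ^ ((s + 2) * d0) * Polynomial.C G := by
    have h1 : φ (z ^ ((s + 1) * c2 + c2)) = Polynomial.X ^ (b * ((s + 3) * a1) * ((s + 1) * c2 + c2))
        * Polynomial.C (z ^ ((s + 1) * c2 + c2)) := by
      rw [map_pow, φz, mul_pow, ← pow_mul, ← map_pow]
    have h2 : φ (y ^ b * x ^ a1)
        = Polynomial.X ^ ((s + 1) * ((s + 3) * (a1 * c2)) * b + b * ((s + 3) * c2) * a1)
          * Polynomial.C (y ^ b * x ^ a1) := by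
      rw [map_mul, map_pow, map_pow, φy, φx, mul_pow, mul_pow, ← pow_mul, ← pow_mul,
        ← map_pow, ← map_pow]
      rw [Polynomial.C_mul, pow_add]
      ring
    rw [hG, map_sub, h1, h2,
      show b * ((s + 3) * a1) * ((s + 1) * c2 + c2) = (s + 2) * d0 by rw [hd0]; ring,
      show (s + 1) * ((s + 3) * (a1 * c2)) * b + b * ((s + 3) * c2) * a1 = (s + 2) * d0 by
        rw [hd0]; ring,
      map_sub, mul_sub]
  have hφH : φ H = Polynomial.X ^ ((s + 2) * d0) * Polynomial.C H := by
    have h1 : φ (x ^ (a1 + (s + 1) * a1)) = Polynomial.X ^ (b * ((s + 3) * c2) * (a1 + (s + 1) * a1))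
        * Polynomial.C (x ^ (a1 + (s + 1) * a1)) := by
      rw [map_pow, φx, mul_pow, ← pow_mul, ← map_pow]
    have h2 : φ (z ^ c2 * y ^ b)
        = Polynomial.X ^ (b * ((s + 3) * a1) * c2 + (s + 1) * ((s + 3) * (a1 * c2)) * b)
          * Polynomial.C (z ^ c2 * y ^ b) := by
      rw [map_mul, map_pow, map_pow, φz, φy, mul_pow, mul_pow, ← pow_mul, ← pow_mul,
        ← map_pow, ← map_pow]
      rw [Polynomial.C_mul, pow_add]
      ring
    rw [hH, map_sub, h1, h2,
      show b * ((s + 3) * c2) * (a1 + (s + 1) * a1) = (s + 2) * d0 by rw [hd0]; ring,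
      show b * ((s + 3) * a1) * c2 + (s + 1) * ((s + 3) * (a1 * c2)) * b = (s + 2) * d0 by
        rw [hd0]; ring,
      map_sub, mul_sub]
  have hφg1 : φ (x ^ a1 - z ^ c2) = Polynomial.X ^ d0 * Polynomial.C (x ^ a1 - z ^ c2) := by
    have h1 : φ (x ^ a1) = Polynomial.X ^ (b * ((s + 3) * c2) * a1) * Polynomial.C (x ^ a1) := by
      rw [map_pow, φx, mul_pow, ← pow_mul, ← map_pow]
    have h2 : φ (z ^ c2) = Polynomial.X ^ (b * ((s + 3) * a1) * c2) * Polynomial.C (z ^ c2) := by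
      rw [map_pow, φz, mul_pow, ← pow_mul, ← map_pow]
    rw [map_sub, h1, h2,
      show b * ((s + 3) * c2) * a1 = d0 by rw [hd0]; ring,
      show b * ((s + 3) * a1) * c2 = d0 by rw [hd0]; ring,
      map_sub, mul_sub]
  have hφQ : φ Q = Polynomial.X ^ ((s + 2) * d0) * Polynomial.C Q := by
    rw [hQ, map_sum, map_sum, Finset.mul_sum]
    refine Finset.sum_congr rfl ?_
    intro i hi
    have hi' : i < s + 3 := Finset.mem_range.mp hi
    obtain ⟨j, hj⟩ : ∃ j, i + j = s + 2 := ⟨s + 2 - i, by omega⟩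
    have hji : s + 3 - 1 - i = j := by omega
    rw [hji]
    have h1 : φ ((x ^ a1) ^ i) = Polynomial.X ^ (b * ((s + 3) * c2) * (a1 * i))
        * Polynomial.C ((x ^ a1) ^ i) := by
      rw [map_pow, map_pow, φx, mul_pow, mul_pow, ← pow_mul, ← pow_mul, ← map_pow, ← map_pow]
    have h2 : φ ((z ^ c2) ^ j) = Polynomial.X ^ (b * ((s + 3) * a1) * (c2 * j))
        * Polynomial.C ((z ^ c2) ^ j) := by
      rw [map_pow, map_pow, φz, mul_pow, mul_pow, ← pow_mul, ← pow_mul, ← map_pow, ← map_pow]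
    rw [map_mul, h1, h2, Polynomial.C_mul]
    rw [show ((s:ℕ) + 2) * d0 = b * ((s + 3) * c2) * (a1 * i) + b * ((s + 3) * a1) * (c2 * j) by
      rw [hd0, ← hj]; ring]
    rw [pow_add]; ring
  have hccX : Polynomial.constantCoeff (Polynomial.X : Polynomial (MvPolynomial (Fin 3) k)) = 0 := by
    simp [Polynomial.constantCoeff_apply]
  have hccC : ∀ u : MvPolynomial (Fin 3) k, Polynomial.constantCoeff (Polynomial.C u) = u :=
    fun u => by simp [Polynomial.constantCoeff_apply]
  -- constant coefficients of φ images are constants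
  have hcc : ∀ p : MvPolynomial (Fin 3) k, ∃ κ : k, Polynomial.constantCoeff (φ p) = MvPolynomial.C κ := by
    intro p
    induction p using MvPolynomial.induction_on with
    | C a => exact ⟨a, by rw [hφ]; simp⟩
    | add p q hp hq =>
      obtain ⟨κ1, h1⟩ := hp; obtain ⟨κ2, h2⟩ := hq
      exact ⟨κ1 + κ2, by rw [map_add, map_add, h1, h2, map_add]⟩
    | mul_X p i hp =>
      obtain ⟨κ, h1⟩ := hp
      refine ⟨0, ?_⟩
      rw [map_mul, map_mul, hφ, aeval_X, map_mul, map_pow, hccX,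
        zero_pow, zero_mul, mul_zero, map_zero]
      fin_cases i <;> simp [hwdef] <;> omega
  -- main dichotomy
  have hd0X : (Polynomial.X : Polynomial (MvPolynomial (Fin 3) k)) ^ d0 ≠ 0 := pow_ne_zero _ Polynomial.X_ne_zero
  rcases hP.mem_or_mem hmem with hg1 | hgQ
  · -- x^a1 - z^c2 ∈ P : impossible
    obtain ⟨p, q, h, hgrep⟩ := hrep _ hg1
    have him := congrArg φ hgrep
    rw [map_add, map_add, map_mul, map_mul, map_mul, hφF, hφG, hφH, hφg1] at him
    have hX1 : (Polynomial.X : Polynomial (MvPolynomial (Fin 3) k)) ^ (2 * ((s + 1) * d0))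
        = Polynomial.X ^ d0 * (Polynomial.X * Polynomial.X ^ (2 * ((s + 1) * d0) - d0 - 1)) := by
      rw [← pow_succ', ← pow_add]
      congr 1
      have h1 : 2 * ((s + 1) * d0) = 2 * d0 + 2 * (s * d0) := by ring
      omega
    have hX2 : (Polynomial.X : Polynomial (MvPolynomial (Fin 3) k)) ^ ((s + 2) * d0)
        = Polynomial.X ^ d0 * (Polynomial.X * Polynomial.X ^ ((s + 2) * d0 - d0 - 1)) := by
      rw [← pow_succ', ← pow_add]
      congr 1
      have h1 : (s + 2) * d0 = 2 * d0 + s * d0 := by ring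
      omega
    have him2 : Polynomial.X ^ d0 * Polynomial.C (x ^ a1 - z ^ c2)
        = Polynomial.X ^ d0 * (Polynomial.X *
            (φ p * Polynomial.X ^ (2 * ((s + 1) * d0) - d0 - 1) * Polynomial.C F
              + φ q * Polynomial.X ^ ((s + 2) * d0 - d0 - 1) * Polynomial.C G
              + φ h * Polynomial.X ^ ((s + 2) * d0 - d0 - 1) * Polynomial.C H)) := by
      rw [him, hX1, hX2]; ring
    have him3 := mul_left_cancel₀ hd0X him2
    have him4 := congrArg Polynomial.constantCoeff him3
    rw [hccC, map_mul, hccX, zero_mul] at him4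
    -- x^a1 = z^c2 : contradiction
    have hxz : x ^ a1 = z ^ c2 := by
      have := sub_eq_zero.mp him4
      exact sub_eq_zero.mp him4
    have hdvd : x ∣ z ^ c2 := hxz ▸ dvd_pow_self x ha1.ne'
    rw [hx, hz] at hdvd
    exact notdvdX13 (by decide) c2 hdvd
  · -- Q ∈ P : impossible
    obtain ⟨p, q, h, hgrep⟩ := hrep _ hgQ
    have him := congrArg φ hgrep
    rw [map_add, map_add, map_mul, map_mul, map_mul, hφF, hφG, hφH, hφQ] at him
    have hXf : (Polynomial.X : Polynomial (MvPolynomial (Fin 3) k)) ^ (2 * ((s + 1) * d0))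
        = Polynomial.X ^ ((s + 2) * d0) * Polynomial.X ^ (s * d0) := by
      rw [← pow_add]; congr 1; ring
    have him2 : Polynomial.X ^ ((s + 2) * d0) * Polynomial.C Q
        = Polynomial.X ^ ((s + 2) * d0) *
            (φ p * Polynomial.X ^ (s * d0) * Polynomial.C F
              + φ q * Polynomial.C G + φ h * Polynomial.C H) := by
      rw [him, hXf]; ring
    have him3 := mul_left_cancel₀ (pow_ne_zero _ Polynomial.X_ne_zero) him2
    have him4 := congrArg Polynomial.constantCoeff him3
    obtain ⟨κp, hκp⟩ := hcc p
    obtain ⟨κq, hκq⟩ := hcc q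
    obtain ⟨κh, hκh⟩ := hcc h
    rw [hccC, map_add, map_add, map_mul, map_mul, map_mul, map_mul,
      hccC, hccC, hccC, hκp, hκq, hκh, map_pow, hccX] at him4
    -- him4 : Q = C κp * 0 ^ (s*d0) * F + C κq * G + C κh * H
    set α : MvPolynomial (Fin 3) k := MvPolynomial.C κp * (0 : MvPolynomial (Fin 3) k) ^ (s * d0) with hα
    have hαC : ∃ κ : k, α = MvPolynomial.C κ := by
      rcases Nat.eq_zero_or_pos (s * d0) with h0 | h0
      · exact ⟨κp, by rw [hα, h0, pow_zero, mul_one]⟩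
      · exact ⟨0, by rw [hα, zero_pow h0.ne', mul_zero, map_zero]⟩
    obtain ⟨κα, hκα⟩ := hαC
    rw [hκα] at him4
    -- final contradiction via coefficients
    have hform : ∀ A B : ℕ, x ^ A * z ^ B
        = monomial (Finsupp.single (0 : Fin 3) A + Finsupp.single 2 B) (1 : k) := by
      intro A B
      rw [hx, hz, X_pow_eq_monomial, X_pow_eq_monomial, monomial_mul, one_mul]
    have hQform : Q = ∑ i ∈ Finset.range (s + 3),
        monomial (Finsupp.single (0 : Fin 3) (a1 * i)
          + Finsupp.single 2 (c2 * (s + 3 - 1 - i))) (1 : k) := by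
      rw [hQ]
      refine Finset.sum_congr rfl fun i _ => ?_
      rw [← pow_mul, ← pow_mul, hform]
    have hQm1 : coeff (Finsupp.single (1 : Fin 3) (2 * b)) Q = 0 := by
      rw [hQform, coeff_sum]
      refine Finset.sum_eq_zero fun i _ => ?_
      rw [coeff_monomial, if_neg]
      intro hEq
      have h1 := DFunLike.congr_fun hEq 1
      simp [Finsupp.single_apply, Fin.ext_iff] at h1
      omega
    have hFm1 : coeff (Finsupp.single (1 : Fin 3) (2 * b)) F = 1 := by
      rw [hF, coeff_sub, hy, X_pow_eq_monomial, coeff_monomial, if_pos rfl,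
        hform ((s + 1) * a1) ((s + 1) * c2), coeff_monomial, if_neg, sub_zero]
      intro hEq
      have h1 := DFunLike.congr_fun hEq 1
      simp [Finsupp.single_apply, Fin.ext_iff] at h1
      omega
    have hGm1 : coeff (Finsupp.single (1 : Fin 3) (2 * b)) G = 0 := by
      rw [hG, coeff_sub, hz, hy, hx, X_pow_eq_monomial, X_pow_eq_monomial, X_pow_eq_monomial,
        monomial_mul, one_mul, coeff_monomial, if_neg, coeff_monomial, if_neg, sub_zero]
      · intro hEq
        have h0 := DFunLike.congr_fun hEq 0
        simp [Finsupp.single_apply, Fin.ext_iff] at h0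
        omega
      · intro hEq
        have h2 := DFunLike.congr_fun hEq 2
        simp [Finsupp.single_apply, Fin.ext_iff] at h2
        omega
    have hHm1 : coeff (Finsupp.single (1 : Fin 3) (2 * b)) H = 0 := by
      rw [hH, coeff_sub, hz, hy, hx, X_pow_eq_monomial, X_pow_eq_monomial, X_pow_eq_monomial,
        monomial_mul, one_mul, coeff_monomial, if_neg, coeff_monomial, if_neg, sub_zero]
      · intro hEq
        have h2 := DFunLike.congr_fun hEq 2
        simp [Finsupp.single_apply, Fin.ext_iff] at h2
        omega
      · intro hEq
        have h0 := DFunLike.congr_fun hEq 0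
        simp [Finsupp.single_apply, Fin.ext_iff] at h0
        omega
    set m2 : Fin 3 →₀ ℕ := Finsupp.single (0 : Fin 3) a1 + Finsupp.single 2 ((s + 1) * c2)
      with hm2
    have hQm2 : coeff m2 Q = 1 := by
      rw [hQform, coeff_sum]
      rw [Finset.sum_eq_single 1]
      · rw [coeff_monomial, if_pos]
        rw [hm2, mul_one, show s + 3 - 1 - 1 = s + 1 from by omega, mul_comm c2 (s + 1)]
      · intro i _ hine
        rw [coeff_monomial, if_neg]
        intro hEq
        have h0 := DFunLike.congr_fun hEq 0
        rw [hm2] at h0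
        simp [Finsupp.single_apply, Fin.ext_iff] at h0
        exact hine (Nat.eq_of_mul_eq_mul_left ha1 (h0.trans (mul_one a1).symm))
      · intro hnotin
        exact absurd (Finset.mem_range.mpr (by omega)) hnotin
    have hGm2 : coeff m2 G = 0 := by
      rw [hG, coeff_sub, hz, hy, hx, X_pow_eq_monomial, X_pow_eq_monomial, X_pow_eq_monomial,
        monomial_mul, one_mul, coeff_monomial, if_neg, coeff_monomial, if_neg, sub_zero]
      · intro hEq
        have h1 := DFunLike.congr_fun hEq 1
        rw [hm2] at h1
        simp [Finsupp.single_apply, Fin.ext_iff] at h1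
        omega
      · intro hEq
        have h0 := DFunLike.congr_fun hEq 0
        rw [hm2] at h0
        simp [Finsupp.single_apply, Fin.ext_iff] at h0
        omega
    have hHm2 : coeff m2 H = 0 := by
      rw [hH, coeff_sub, hz, hy, hx, X_pow_eq_monomial, X_pow_eq_monomial, X_pow_eq_monomial,
        monomial_mul, one_mul, coeff_monomial, if_neg, coeff_monomial, if_neg, sub_zero]
      · intro hEq
        have h1 := DFunLike.congr_fun hEq 1
        rw [hm2] at h1
        simp [Finsupp.single_apply, Fin.ext_iff] at h1
        omega
      · intro hEq
        have h2 := DFunLike.congr_fun hEq 2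
        rw [hm2] at h2
        simp [Finsupp.single_apply, Fin.ext_iff] at h2
        omega
    have e1 := congrArg (coeff (Finsupp.single (1 : Fin 3) (2 * b))) him4
    have e2 := congrArg (coeff m2) him4
    rw [coeff_add, coeff_add, coeff_C_mul, coeff_C_mul, coeff_C_mul,
      hQm1, hFm1, hGm1, hHm1] at e1
    rw [coeff_add, coeff_add, coeff_C_mul, coeff_C_mul, coeff_C_mul,
      hQm2, hGm2, hHm2] at e2
    have hκα0 : κα = 0 := by
      have := e1.symm
      simpa using this
    rw [hκα0] at e2
    simp at e2

theorem stmt_13 {k : Type*} [Field k]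
    (a1 a2 b c1 c2 r : ℕ)
    (ha1 : 0 < a1) (hb : 0 < b) (hc2 : 0 < c2)
    (ha : a1 ≤ a2) (hc : c2 ≤ c1)
    (hslope : a2 * c2 ≤ a1 * c1)
    (hr : r = a2 / a1 + 1)
    (x y z F G H : MvPolynomial (Fin 3) k)
    (hx : x = X 0) (hy : y = X 1) (hz : z = X 2)
    (hF : F = y ^ (2 * b) - x ^ a2 * z ^ c1)
    (hG : G = z ^ (c1 + c2) - y ^ b * x ^ a1)
    (hH : H = x ^ (a1 + a2) - z ^ c2 * y ^ b)
    (D : ℕ → MvPolynomial (Fin 3) k)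
    (hD0 : D 0 = -(y ^ b))
    (hDrec : ∀ l, 1 ≤ l → l ≤ r →
      z ^ (c2 - ((l - 1) * c2 - c1)) * D l
        = x ^ ((l - 1) * a1 - a2) * (H * D (l - 1))
          - x ^ ((((l - 1) * a1 - a2) + a2) - (l - 1) * a1) * G ^ l) :
    ((r - 1) * a1 < a2 →
      ∀ l, 1 ≤ l → l ≤ r → D l - (-(y ^ b)) ^ (l + 1) ∈ Ideal.span {x}) ∧
    (a2 = (r - 1) * a1 →
      (Ideal.span {F, G, H} : Ideal (MvPolynomial (Fin 3) k)).IsPrime →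
      ∀ l, 1 ≤ l → l ≤ r → D l - (-(y ^ b)) ^ (l + 1) ∈ Ideal.span {z}) := by
  have hr1 : r - 1 = a2 / a1 := by rw [hr, Nat.add_sub_cancel]
  have hr2 : 2 ≤ r := by
    have h1 : 1 ≤ a2 / a1 := (Nat.one_le_div_iff ha1).mpr ha
    rw [hr]; exact Nat.add_le_add_right h1 1
  have hram : (r - 1) * a1 ≤ a2 := by
    rw [hr1]; exact Nat.div_mul_le_self a2 a1
  have hmle : ∀ m : ℕ, m * a1 ≤ a2 → m * c2 ≤ c1 := by
    intro m hm
    have h1 : a1 * (m * c2) ≤ a1 * c1 := by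
      calc a1 * (m * c2) = (m * a1) * c2 := by ring
      _ ≤ a2 * c2 := Nat.mul_le_mul_right c2 hm
      _ ≤ a1 * c1 := hslope
    exact Nat.le_of_mul_le_mul_left h1 ha1
  have hrec' : ∀ l, 1 ≤ l → l ≤ r →
      z ^ c2 * D l = H * D (l - 1) - x ^ (a2 - (l - 1) * a1) * G ^ l := by
    intro l hl hlr
    have h1 : (l - 1) * a1 ≤ a2 :=
      le_trans (Nat.mul_le_mul_right a1 (by omega : l - 1 ≤ r - 1)) hram
    have h2 : (l - 1) * c2 ≤ c1 := hmle _ h1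
    have h := hDrec l hl hlr
    rwa [Nat.sub_eq_zero_of_le h1, Nat.sub_eq_zero_of_le h2, Nat.sub_zero, pow_zero,
      one_mul, Nat.zero_add] at h
  have hxprime : Prime x := hx ▸ primeX13h 0
  have hzprime : Prime z := hz ▸ primeX13h 2
  constructor
  · -- Part 1
    intro hlt l hl1 hlr
    rw [Ideal.mem_span_singleton]
    have main : ∀ m, m ≤ r → x ∣ D m - (-(y ^ b)) ^ (m + 1) := by
      intro m
      induction m with
      | zero => intro _; rw [hD0]; simp
      | succ n ih =>
        intro hnr
        have ihn := ih (by omega)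
        have hna' : n * a1 < a2 :=
          lt_of_le_of_lt (Nat.mul_le_mul_right a1 (by omega : n ≤ r - 1)) hlt
        have hR := hrec' (n + 1) (by omega) hnr
        simp only [Nat.add_sub_cancel] at hR
        have key : z ^ c2 * (D (n + 1) - (-(y ^ b)) ^ (n + 2))
            = x ^ (a1 + a2) * D n - z ^ c2 * y ^ b * (D n - (-(y ^ b)) ^ (n + 1))
              - x ^ (a2 - n * a1) * G ^ (n + 1) := by
          linear_combination hR + D n * hH
        have hdvd : x ∣ z ^ c2 * (D (n + 1) - (-(y ^ b)) ^ (n + 2)) := by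
          rw [key]
          exact dvd_sub
            (dvd_sub (Dvd.dvd.mul_right (dvd_pow_self x (by omega)) _)
              (Dvd.dvd.mul_left ihn _))
            (Dvd.dvd.mul_right (dvd_pow_self x (by omega)) _)
        rcases hxprime.2.2 _ _ hdvd with h | h
        · exact absurd h (hx ▸ hz ▸ notdvdX13 (by decide) c2)
        · exact h
    exact main l hlr
  · -- Part 2
    intro ha2e hP l hl1 hlr
    rw [Ideal.mem_span_singleton]
    have hrc : (r - 1) * c2 ≤ c1 := hmle _ (le_of_eq ha2e.symm)
    rcases lt_or_eq_of_le hrc with hlt2 | heq2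
    · -- easy case
      have hzne : z ≠ 0 := by rw [hz]; exact MvPolynomial.X_ne_zero _
      have chain : ∀ m, m ≤ r → z ^ (c1 + c2 - m * c2) ∣ D m - (-(y ^ b)) ^ (m + 1) := by
        intro m
        induction m with
        | zero => intro _; rw [hD0]; simp
        | succ n ih =>
          intro hnr
          obtain ⟨u, hu⟩ := ih (by omega)
          have hna : n * a1 ≤ a2 :=
            le_trans (Nat.mul_le_mul_right a1 (by omega : n ≤ r - 1)) hram
          have hnc : n * c2 ≤ c1 := hmle _ hna
          have hR := hrec' (n + 1) (by omega) hnr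
          simp only [Nat.add_sub_cancel] at hR
          obtain ⟨T, hT⟩ : z ^ (c1 + c2) ∣ G ^ (n + 1) - (-(y ^ b * x ^ a1)) ^ (n + 1) := by
            have hGw : G - -(y ^ b * x ^ a1) = z ^ (c1 + c2) := by rw [hG]; ring
            exact hGw ▸ sub_dvd_pow_sub_pow G _ (n + 1)
          have hxe : x ^ (a2 - n * a1) * (x ^ a1) ^ (n + 1) = x ^ (a1 + a2) := by
            rw [← pow_mul, ← pow_add]; congr 1
            have : a1 * (n + 1) = n * a1 + a1 := by ring
            omega
          have hz1 : z ^ (c1 + c2 - n * c2) = z ^ (c1 - n * c2) * z ^ c2 := by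
            rw [← pow_add]; congr 1; omega
          have hz2 : z ^ (c1 + c2) = z ^ c2 * (z ^ (c1 - n * c2) * z ^ (n * c2)) := by
            rw [← pow_add, ← pow_add]; congr 1; omega
          have key : z ^ c2 * (D (n + 1) - (-(y ^ b)) ^ (n + 2))
              = z ^ c2 * (z ^ (c1 - n * c2)
                  * (H * u - z ^ (n * c2) * (x ^ (a2 - n * a1) * T))) := by
            linear_combination hR + H * hu + H * u * hz1
              - x ^ (a2 - n * a1) * hT - x ^ (a2 - n * a1) * T * hz2
              + (-(y ^ b)) ^ (n + 1) * hH - (-(y ^ b)) ^ (n + 1) * hxe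
          have key2 := mul_left_cancel₀ (pow_ne_zero c2 hzne) key
          rw [key2]
          refine Dvd.dvd.mul_right (pow_dvd_pow z ?_) _
          have : (n + 1) * c2 = n * c2 + c2 := by ring
          omega
      have hd := chain l hlr
      refine dvd_trans (dvd_trans ?_ (pow_dvd_pow z (le_refl _))) hd
      refine dvd_pow_self z ?_
      have h1 : l * c2 ≤ r * c2 := Nat.mul_le_mul_right c2 hlr
      have h2 : r * c2 = (r - 1) * c2 + c2 := by
        have : r - 1 + 1 = r := by omega
        calc r * c2 = (r - 1 + 1) * c2 := by rw [this]
        _ = (r - 1) * c2 + c2 := by ring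
      omega
    · -- hard case : contradiction
      exfalso
      obtain ⟨s, rfl⟩ : ∃ s, r = s + 2 := ⟨r - 2, by omega⟩
      have ha2' : a2 = (s + 1) * a1 := by simpa using ha2e
      have hc1' : c1 = (s + 1) * c2 := by simpa using heq2.symm
      subst ha2' hc1'
      exact hardcase a1 b c2 s ha1 hb hc2 x y z F G H hx hy hz hF hG hH hP
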